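/- Krylov exactness: let A be an n×n matrix, v ≠ 0, and suppose the Krylov subspace K_m(A, v) = span{v, Av, …, A^{m−1}v} is invariant under A (i.e., A K_m ⊆ K_m). If V_m is an orthonormal basis matrix of K_m with first column v/‖v‖ and H_m = V_mᵀ A V_m, then exp(A)v = ‖v‖ · V_m exp(H_m) e₁. -/

import Mathlib

theorem stmt_14 (n m : ℕ) (A : Matrix (Fin n) (Fin n) ℝ) (v : Fin n → ℝ)
    (hv : v ≠ 0)
    (V : Matrix (Fin n) (Fin (m + 1)) ℝ)
    (horth : V.transpose * V = 1)
    (hspan : Submodule.span ℝ (Set.range fun j => fun i => V i j)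
        = Submodule.span ℝ ((fun k : Fin (m + 1) => (A ^ (k : ℕ)).mulVec v) '' Set.univ))
    (hfirst : ∀ i, V i 0 = v i / Real.sqrt (∑ i, v i ^ 2))
    (hinv : ∀ x : Fin (m + 1) → ℝ, ∃ c : Fin (m + 1) → ℝ,
        A.mulVec (V.mulVec x) = V.mulVec c) :
    (NormedSpace.exp A).mulVec v
      = Real.sqrt (∑ i, v i ^ 2) •
          V.mulVec ((NormedSpace.exp (V.transpose * A * V)).mulVec (Pi.single 0 1)) := by
  set s : ℝ := Real.sqrt (∑ i, v i ^ 2) with hs_def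
  set H : Matrix (Fin (m + 1)) (Fin (m + 1)) ℝ := V.transpose * A * V with hH_def
  -- s ≠ 0
  have hs : 0 < s := by
    apply Real.sqrt_pos.mpr
    have : ∃ i, v i ≠ 0 := by
      by_contra h
      push_neg at h
      exact hv (funext fun i => h i)
    obtain ⟨i, hi⟩ := this
    exact Finset.sum_pos' (fun i _ => sq_nonneg _) ⟨i, Finset.mem_univ i, by positivity⟩
  -- intertwining for vectors
  have key : ∀ x : Fin (m + 1) → ℝ, A.mulVec (V.mulVec x) = V.mulVec (H.mulVec x) := by
    intro x
    obtain ⟨c, hc⟩ := hinv x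
    have hcx : c = H.mulVec x := by
      have h1 : V.transpose.mulVec (V.mulVec c) = c := by
        rw [Matrix.mulVec_mulVec, horth, Matrix.one_mulVec]
      calc c = V.transpose.mulVec (V.mulVec c) := h1.symm
        _ = V.transpose.mulVec (A.mulVec (V.mulVec x)) := by rw [hc]
        _ = H.mulVec x := by
            rw [Matrix.mulVec_mulVec, Matrix.mulVec_mulVec, hH_def, Matrix.mul_assoc]
    rw [hc, hcx]
  -- intertwining for matrices
  have hAV : A * V = V * H := by
    ext i j
    have := congrFun (key (Pi.single j 1)) i
    simpa [Matrix.mulVec_single_one, ← Matrix.mulVec_mulVec, Matrix.mul_apply, Matrix.mulVec, dotProduct, Pi.single_apply] using this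
  have hpow : ∀ k : ℕ, A ^ k * V = V * H ^ k := by
    intro k
    induction k with
    | zero => simp
    | succ k ih =>
        rw [pow_succ, pow_succ, Matrix.mul_assoc, hAV, ← Matrix.mul_assoc, ih, Matrix.mul_assoc]
  -- exp intertwining
  have hexpV : NormedSpace.exp A * V = V * NormedSpace.exp H := by
    letI : SeminormedRing (Matrix (Fin n) (Fin n) ℝ) := Matrix.linftyOpSemiNormedRing
    letI : NormedRing (Matrix (Fin n) (Fin n) ℝ) := Matrix.linftyOpNormedRing
    letI : NormedAlgebra ℝ (Matrix (Fin n) (Fin n) ℝ) := Matrix.linftyOpNormedAlgebra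
    letI : SeminormedRing (Matrix (Fin (m+1)) (Fin (m+1)) ℝ) := Matrix.linftyOpSemiNormedRing
    letI : NormedRing (Matrix (Fin (m+1)) (Fin (m+1)) ℝ) := Matrix.linftyOpNormedRing
    letI : NormedAlgebra ℝ (Matrix (Fin (m+1)) (Fin (m+1)) ℝ) := Matrix.linftyOpNormedAlgebra
    have hsumA : Summable fun k : ℕ => ((k.factorial : ℝ))⁻¹ • A ^ k :=
      NormedSpace.expSeries_summable' (𝕂 := ℝ) A
    have hsumH : Summable fun k : ℕ => ((k.factorial : ℝ))⁻¹ • H ^ k :=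
      NormedSpace.expSeries_summable' (𝕂 := ℝ) H
    -- right-multiplication by V as a linear map
    let f : Matrix (Fin n) (Fin n) ℝ →ₗ[ℝ] Matrix (Fin n) (Fin (m + 1)) ℝ :=
      { toFun := fun X => X * V
        map_add' := fun X Y => Matrix.add_mul X Y V
        map_smul' := fun c X => Matrix.smul_mul c X V }
    let g : Matrix (Fin (m+1)) (Fin (m+1)) ℝ →ₗ[ℝ] Matrix (Fin n) (Fin (m + 1)) ℝ :=
      { toFun := fun Y => V * Y
        map_add' := fun X Y => Matrix.mul_add V X Y
        map_smul' := fun c X => Matrix.mul_smul V c X }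
    have hf : Continuous f := LinearMap.continuous_of_finiteDimensional f
    have hg : Continuous g := LinearMap.continuous_of_finiteDimensional g
    calc NormedSpace.exp A * V
        = f (∑' k : ℕ, ((k.factorial : ℝ))⁻¹ • A ^ k) := by rw [NormedSpace.exp_eq_tsum (𝕂 := ℝ)]; rfl
      _ = ∑' k : ℕ, f (((k.factorial : ℝ))⁻¹ • A ^ k) :=
            ContinuousLinearMap.map_tsum (LinearMap.toContinuousLinearMap f) hsumA
      _ = ∑' k : ℕ, g (((k.factorial : ℝ))⁻¹ • H ^ k) := by
            congr 1
            funext k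
            show (((k.factorial : ℝ))⁻¹ • A ^ k) * V = V * (((k.factorial : ℝ))⁻¹ • H ^ k)
            rw [Matrix.smul_mul, Matrix.mul_smul, hpow k]
      _ = g (∑' k : ℕ, ((k.factorial : ℝ))⁻¹ • H ^ k) :=
            (ContinuousLinearMap.map_tsum (LinearMap.toContinuousLinearMap g) hsumH).symm
      _ = V * NormedSpace.exp H := by rw [NormedSpace.exp_eq_tsum (𝕂 := ℝ)]; rfl
  -- v = s • V *ᵥ e₁
  have hVe : V.mulVec (Pi.single 0 1) = s⁻¹ • v := by
    funext i
    rw [Matrix.mulVec_single]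
    simp [hfirst i, div_eq_inv_mul]
  calc (NormedSpace.exp A).mulVec v
      = (NormedSpace.exp A).mulVec (s • V.mulVec (Pi.single 0 1)) := by
        rw [hVe, smul_smul, mul_inv_cancel₀ hs.ne', one_smul]
    _ = s • (NormedSpace.exp A).mulVec (V.mulVec (Pi.single 0 1)) := by
        rw [Matrix.mulVec_smul]
    _ = s • (NormedSpace.exp A * V).mulVec (Pi.single 0 1) := by
        rw [Matrix.mulVec_mulVec]
    _ = s • (V * NormedSpace.exp H).mulVec (Pi.single 0 1) := by rw [hexpV]
    _ = s • V.mulVec ((NormedSpace.exp H).mulVec (Pi.single 0 1)) := by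
        rw [Matrix.mulVec_mulVec]
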